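/- Let n ≥ 3 and r ≥ 3 be integers with (n, r) ≠ (3, 3). Then every graph G that is r-Ramsey for K_n is also r-Ramsey for K_n + K_{n-1}; that is, every r-edge-colouring of G contains a monochromatic copy of the disjoint union K_n + K_{n-1}. -/

import Mathlib

open SimpleGraph

/-- The vertex-disjoint union `K_n + K_m` of two complete graphs. -/
def cliqueSum (n m : ℕ) : SimpleGraph (Fin n ⊕ Fin m) :=
  SimpleGraph.fromRel fun x y =>
    (∃ a b, x = Sum.inl a ∧ y = Sum.inl b) ∨ (∃ a b, x = Sum.inr a ∧ y = Sum.inr b)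

/-- There is a copy of `H` in `G` that is monochromatic in colour `i`
under the edge-colouring `c`. -/
def MonoCopy {V W : Type*} {r : ℕ} (G : SimpleGraph V) (H : SimpleGraph W)
    (c : Sym2 V → Fin r) (i : Fin r) : Prop :=
  ∃ f : H →g G, Function.Injective f ∧ ∀ u v, H.Adj u v → c s(f u, f v) = i

/-- `G` is `r`-Ramsey for `H`: every `r`-colouring of the edges of `G`
admits a monochromatic copy of `H`. -/
def IsRamseyFor {V W : Type*} (r : ℕ) (G : SimpleGraph V) (H : SimpleGraph W) : Prop :=
  ∀ c : Sym2 V → Fin r, ∃ i : Fin r, MonoCopy G H c i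

/-- `G₁` and `G₂` are `r`-Ramsey equivalent. -/
def RamseyEquiv {V W : Type*} (r : ℕ) (G₁ : SimpleGraph V) (G₂ : SimpleGraph W) : Prop :=
  ∀ {U : Type*} (G : SimpleGraph U), IsRamseyFor r G G₁ ↔ IsRamseyFor r G G₂

/-- `N` has the Ramsey property for clique sizes `n : Fin r → ℕ`: every `r`-colouring of
the edges of `K_N` admits a colour `i` and an `i`-monochromatic clique of size `n i`. -/
def HasRamseyProp (N : ℕ) {r : ℕ} (n : Fin r → ℕ) : Prop :=
  ∀ c : Sym2 (Fin N) → Fin r, ∃ i : Fin r, ∃ s : Finset (Fin N),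
    s.card = n i ∧ ∀ u ∈ s, ∀ v ∈ s, u ≠ v → c s(u, v) = i

/-- The Ramsey number `R_r(n 0, …, n (r-1))`. -/
noncomputable def ramseyNumber {r : ℕ} (n : Fin r → ℕ) : ℕ :=
  sInf {N | HasRamseyProp N n}


section RamseyEquivProof

open Finset
open scoped symmDiff

def Good (n r : ℕ) (Λ : Fin r × Fin n → Fin r × Fin n → Fin r) : Prop :=
  (∀ x y, Λ x y = Λ y x) ∧
  (∀ (i : Fin r) (p q : Fin n), p ≠ q → Λ (i,p) (i,q) ≠ i) ∧
  (∀ g : Fin n → Fin r × Fin n, Function.Injective g → ∀ m : Fin r,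
     ¬ (∀ a b : Fin n, a ≠ b → Λ (g a) (g b) = m))

lemma finAddNe {r : ℕ} (i k : Fin r) (hk : 0 < k.val) : i + k ≠ i := by
  intro h
  have hv : (i.val + k.val) % r = i.val := by
    have := congrArg Fin.val h
    simpa [Fin.val_add] using this
  rcases lt_or_ge (i.val + k.val) r with h' | h'
  · rw [Nat.mod_eq_of_lt h'] at hv; omega
  · have h2 : (i.val + k.val) % r = i.val + k.val - r := by
      rw [Nat.mod_eq_sub_mod h', Nat.mod_eq_of_lt (by omega)]
    have := k.isLt
    omega

lemma existsGood3 (n r : ℕ) (hn3 : n = 3) (hr : 4 ≤ r) : ∃ Λ, Good n r Λ := by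
  subst hn3
  have h0r : 0 < r := by omega
  set o1 : Fin r := ⟨1, by omega⟩ with ho1
  set o2 : Fin r := ⟨2, by omega⟩ with ho2
  set i0 : Fin r := ⟨0, by omega⟩ with hi0
  set supp : Fin r × Fin 3 → Finset (Fin r) := fun x =>
    if x.2.val = 0 then {x.1} else if x.2.val = 1 then {x.1, x.1 + o1}
    else {x.1, x.1 + o1, x.1 + o2} with hsupp
  have A1 : ∀ j : Fin r, j + o1 ≠ j := fun j => finAddNe j o1 (by simp [ho1])
  have A2 : ∀ j : Fin r, j + o2 ≠ j := fun j => finAddNe j o2 (by simp [ho2])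
  have A12 : ∀ j : Fin r, j + o1 ≠ j + o2 := by
    intro j h
    have h2 : o1 = o2 := add_left_cancel h
    simp [ho1, ho2, Fin.ext_iff] at h2
  have A11 : ∀ j : Fin r, j + o1 + o1 ≠ j := by
    intro j
    rw [add_assoc]
    apply finAddNe
    show 0 < ((o1 + o1 : Fin r)).val
    have h2 : ((o1 + o1 : Fin r)).val = 2 % r := by simp [Fin.val_add, ho1]
    rw [Nat.mod_eq_of_lt (by omega)] at h2
    omega
  have A3 : ∀ j : Fin r, j + o1 + o2 ≠ j := by
    intro j
    rw [add_assoc]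
    apply finAddNe
    show 0 < ((o1 + o2 : Fin r)).val
    have h2 : ((o1 + o2 : Fin r)).val = 3 % r := by simp [Fin.val_add, ho1, ho2]
    rw [Nat.mod_eq_of_lt (by omega)] at h2
    omega
  have cardsupp : ∀ x : Fin r × Fin 3, (supp x).card = x.2.val + 1 := by
    rintro ⟨i, p⟩
    fin_cases p
    · simp [hsupp]
    · simp only [hsupp]
      norm_num
      rw [card_pair ((A1 i).symm)]
    · simp only [hsupp]
      norm_num
      rw [card_insert_of_notMem (by simp [(A1 i).symm, (A2 i).symm]), card_pair (A12 i)]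
  have hne : ∀ x y : Fin r × Fin 3, x ≠ y → supp x ≠ supp y := by
    rintro ⟨i, p⟩ ⟨j, q⟩ hxy h
    by_cases hpq : p = q
    · subst hpq
      have hij : i ≠ j := by
        intro h'; exact hxy (by rw [h'])
      fin_cases p
      · simp [hsupp] at h; exact hij h
      · simp only [hsupp] at h
        norm_num at h
        have hi : i = j ∨ i = j + o1 := by
          have : i ∈ ({j, j + o1} : Finset (Fin r)) := by rw [← h]; simp
          simpa using this
        rcases hi with hi | hi
        · exact hij hi
        · have hj : j = i ∨ j = i + o1 := by
            have : j ∈ ({i, i + o1} : Finset (Fin r)) := by rw [h]; simp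
            simpa using this
          rcases hj with hj | hj
          · exact hij hj.symm
          · rw [hi] at hj
            exact A11 j hj.symm
      · simp only [hsupp] at h
        norm_num at h
        have hi : i = j ∨ i = j + o1 ∨ i = j + o2 := by
          have : i ∈ ({j, j + o1, j + o2} : Finset (Fin r)) := by rw [← h]; simp
          simpa using this
        have hkey : ∀ a : Fin r, a ∈ ({j, j + o1, j + o2} : Finset (Fin r)) ↔
            a ∈ ({i, i + o1, i + o2} : Finset (Fin r)) := by
          intro a; rw [h]
        rcases hi with hi | hi | hi
        · exact hij hi
        · -- i = j + o1 : then i + o2 = j + o1 + o2 must be in {j, j+o1, j+o2}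
          have hmem : i + o2 ∈ ({j, j + o1, j + o2} : Finset (Fin r)) := by
            rw [hkey]; simp
          simp only [mem_insert, mem_singleton, hi] at hmem
          rcases hmem with hm | hm | hm
          · exact A3 j hm
          · exact A2 (j + o1) hm
          · rw [add_right_comm] at hm
            exact A1 (j + o2) hm
        · -- i = j + o2 : then i + o1 = j + o2 + o1 ∈ {j, j+o1, j+o2}
          have hmem : i + o1 ∈ ({j, j + o1, j + o2} : Finset (Fin r)) := by
            rw [hkey]; simp
          simp only [mem_insert, mem_singleton, hi] at hmem
          rcases hmem with hm | hm | hm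
          · rw [add_right_comm] at hm; exact A3 j hm
          · rw [add_right_comm] at hm; exact A2 (j + o1) hm
          · exact A1 (j + o2) hm
    · have hc := congrArg card h
      rw [cardsupp, cardsupp] at hc
      simp only at hc
      exact hpq (Fin.ext (by omega))
  have hmemi : ∀ (i : Fin r) (p : Fin 3), i ∈ supp (i, p) := by
    intro i p; fin_cases p <;> simp [hsupp]
  have hmem : ∀ x y : Fin r × Fin 3, x ≠ y →
      WithTop.untopD i0 ((supp x ∆ supp y).min) ∈ supp x ∆ supp y := by
    intro x y hxy
    have hnon : (supp x ∆ supp y).Nonempty := by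
      rw [symmDiff_nonempty]; exact hne x y hxy
    obtain ⟨a, ha⟩ := min_of_nonempty hnon
    rw [ha]
    simpa using mem_of_min ha
  refine ⟨fun x y => WithTop.untopD i0 ((supp x ∆ supp y).min), ?_, ?_, ?_⟩
  · intro x y
    simp only
    rw [symmDiff_comm]
  · intro i p q hpq heq
    simp only at heq
    have h1 := hmem (i, p) (i, q) (by simp [hpq])
    rw [heq] at h1
    rw [mem_symmDiff] at h1
    have h2 := hmemi i p
    have h3 := hmemi i q
    tauto
  · intro g hg m hmono
    have hne01 : g 0 ≠ g 1 := fun h => (by decide : (0 : Fin 3) ≠ 1) (hg h)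
    have hne02 : g 0 ≠ g 2 := fun h => (by decide : (0 : Fin 3) ≠ 2) (hg h)
    have hne12 : g 1 ≠ g 2 := fun h => (by decide : (1 : Fin 3) ≠ 2) (hg h)
    have m01 : m ∈ supp (g 0) ∆ supp (g 1) := by
      have h := hmono 0 1 (by decide)
      simp only at h
      rw [← h]; exact hmem _ _ hne01
    have m02 : m ∈ supp (g 0) ∆ supp (g 2) := by
      have h := hmono 0 2 (by decide)
      simp only at h
      rw [← h]; exact hmem _ _ hne02
    have m12 : m ∈ supp (g 1) ∆ supp (g 2) := by
      have h := hmono 1 2 (by decide)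
      simp only at h
      rw [← h]; exact hmem _ _ hne12
    rw [mem_symmDiff] at m01 m02 m12
    tauto

lemma existsGood4 (n r : ℕ) (hn : 4 ≤ n) (hr : 3 ≤ r) : ∃ Λ, Good n r Λ := by
  set xc : Fin r → Fin r := fun i => if i.val = 0 then ⟨1, by omega⟩ else ⟨0, by omega⟩ with hxc
  set yc : Fin r → Fin r := fun i => if i.val = 2 then ⟨1, by omega⟩ else ⟨2, by omega⟩ with hyc
  have xc_ne : ∀ i, xc i ≠ i := by
    intro i h
    simp only [hxc] at h
    split at h <;> (rw [Fin.ext_iff] at h; simp at h; omega)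
  have yc_ne : ∀ i, yc i ≠ i := by
    intro i h
    simp only [hyc] at h
    split at h <;> (rw [Fin.ext_iff] at h; simp at h; omega)
  have xy_ne : ∀ i, xc i ≠ yc i := by
    intro i
    simp only [hxc, hyc]
    split <;> split <;> first | omega | (intro hcc; rw [Fin.mk.injEq] at hcc; omega)
  set χ : Fin r → Fin n → Fin n → Fin r := fun i p q =>
    if p.val / 2 = q.val / 2 ∧ p.val < 4 then yc i else xc i with hχ
  have χsymm : ∀ i p q, χ i p q = χ i q p := by
    intro i p q
    simp only [hχ]
    by_cases h : p.val / 2 = q.val / 2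
    · by_cases h2 : p.val < 4
      · rw [if_pos ⟨h, h2⟩, if_pos ⟨h.symm, by omega⟩]
      · rw [if_neg (by tauto), if_neg (by rintro ⟨h3, h4⟩; exact h2 (by omega))]
    · rw [if_neg (by tauto), if_neg (by rintro ⟨h3, h4⟩; exact h h3.symm)]
  have χmem : ∀ i p q, χ i p q = xc i ∨ χ i p q = yc i := by
    intro i p q
    simp only [hχ]
    split <;> simp
  have χne : ∀ i p q, χ i p q ≠ i := by
    intro i p q
    rcases χmem i p q with h | h <;> rw [h]
    exacts [xc_ne i, yc_ne i]
  refine ⟨fun x y => if x.1 = y.1 then χ x.1 x.2 y.2 else max x.1 y.1, ?_, ?_, ?_⟩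
  · intro x y
    simp only
    by_cases h : x.1 = y.1
    · rw [if_pos h, if_pos h.symm, h, χsymm]
    · rw [if_neg h, if_neg (Ne.symm h), max_comm]
  · intro i p q hpq
    simp only [if_pos rfl]
    exact χne i p q
  · intro g hg m hmono
    simp only at hmono
    by_cases hsame : ∀ a b : Fin n, (g a).1 = (g b).1
    · -- all in one block
      have h0 : (0 : ℕ) < n := by omega
      set i := (g ⟨0, h0⟩).1 with hi
      have posinj : Function.Injective (fun a => (g a).2) := by
        intro a b h
        exact hg (Prod.ext (hsame a b) h)
      have possurj := Finite.injective_iff_surjective.mp posinj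
      obtain ⟨a0, ha0⟩ := possurj ⟨0, by omega⟩
      obtain ⟨a1, ha1⟩ := possurj ⟨1, by omega⟩
      obtain ⟨a2, ha2⟩ := possurj ⟨2, by omega⟩
      simp only at ha0 ha1 ha2
      have hne01 : a0 ≠ a1 := by
        intro h; rw [h, ha1] at ha0; simp [Fin.ext_iff] at ha0
      have hne02 : a0 ≠ a2 := by
        intro h; rw [h, ha2] at ha0; simp [Fin.ext_iff] at ha0
      have e01 := hmono a0 a1 hne01
      have e02 := hmono a0 a2 hne02
      rw [if_pos (hsame a0 a1)] at e01
      rw [if_pos (hsame a0 a2)] at e02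
      rw [ha0, ha1] at e01
      rw [ha0, ha2] at e02
      rw [hsame a0 ⟨0, h0⟩] at e01 e02
      rw [← hi] at e01 e02
      have c1 : χ i ⟨0, by omega⟩ ⟨1, by omega⟩ = yc i := by
        simp only [hχ]
        rw [if_pos (by norm_num)]
      have c2 : χ i ⟨0, by omega⟩ ⟨2, by omega⟩ = xc i := by
        simp only [hχ]
        rw [if_neg (by norm_num)]
      rw [c1] at e01
      rw [c2] at e02
      exact xy_ne i (by rw [e02, e01])
    · -- at least two blocks
      push_neg at hsame
      obtain ⟨u, w, huw⟩ := hsame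
      have hFne : (univ.image fun a => (g a).1).Nonempty := by
        apply Finset.Nonempty.image
        exact ⟨u, mem_univ u⟩
      set j := (univ.image fun a => (g a).1).max' hFne with hj
      obtain ⟨aj, _, haj⟩ := mem_image.mp ((univ.image fun a => (g a).1).max'_mem hFne)
      have hle : ∀ a, (g a).1 ≤ j := by
        intro a
        rw [hj]
        exact le_max' _ _ (mem_image_of_mem (fun a => (g a).1) (mem_univ a))
      -- some element not in block j
      have hbex : ∃ b, (g b).1 ≠ j := by
        by_cases h : (g u).1 = j
        · exact ⟨w, by rw [← h]; exact huw.symm⟩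
        · exact ⟨u, h⟩
      obtain ⟨b0, hb0⟩ := hbex
      have hajb0 : aj ≠ b0 := by
        intro h; rw [← h, haj] at hb0; exact hb0 rfl
      have hmj : m = j := by
        have e := hmono aj b0 hajb0
        rw [if_neg (by rw [haj]; exact fun h => hb0 h.symm)] at e
        rw [haj] at e
        rw [max_eq_left (hle b0)] at e
        exact e.symm
      -- block j contains only aj
      have hTj : ∀ a, a ≠ aj → (g a).1 ≠ j := by
        intro a ha hj'
        have e := hmono a aj ha
        rw [if_pos (by rw [hj', haj])] at e
        rw [hj'] at e
        rw [hmj] at e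
        exact χne j _ _ e
      -- all non-aj elements share a block
      have hone : ∀ a b, a ≠ aj → b ≠ aj → a ≠ b → (g a).1 = (g b).1 := by
        intro a b ha hb hab
        by_contra hne'
        have e := hmono a b hab
        rw [if_neg hne'] at e
        rw [hmj] at e
        rcases max_choice (g a).1 (g b).1 with h | h <;> rw [h] at e
        · exact hTj a ha e
        · exact hTj b hb e
      have hib0 : b0 ≠ aj := fun h => hb0 (h ▸ haj)
      set i := (g b0).1 with hi
      have hblk : ∀ a, a ≠ aj → (g a).1 = i := by
        intro a ha
        by_cases h : a = b0
        · rw [h]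
        · exact hone a b0 ha hib0 h
      -- all pairs of non-aj elements: χ i (pos a) (pos b) = j
      have hpair : ∀ a b, a ≠ aj → b ≠ aj → a ≠ b → χ i (g a).2 (g b).2 = j := by
        intro a b ha hb hab
        have e := hmono a b hab
        rw [if_pos (by rw [hblk a ha, hblk b hb])] at e
        rw [hblk a ha] at e
        rw [hmj] at e
        exact e
      -- the finishing argument
      have pinj : ∀ a b, a ≠ aj → b ≠ aj → (g a).2 = (g b).2 → a = b := by
        intro a b ha hb h
        exact hg (Prod.ext (by rw [hblk a ha, hblk b hb]) h)
      set P : Finset (Fin n) := (univ.erase aj).image (fun a => (g a).2) with hP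
      have hPcard : P.card = n - 1 := by
        rw [hP, card_image_of_injOn, card_erase_of_mem (mem_univ aj), card_univ,
          Fintype.card_fin]
        intro a ha b hb h
        exact pinj a b (mem_erase.mp ha).1 (mem_erase.mp hb).1 h
      have hmiss : ∀ v w : Fin n, v ≠ w → v ∉ P → w ∉ P → False := by
        intro v w hvw hv hw
        have hsub : P ⊆ univ \ {v, w} := by
          intro x hx
          rw [mem_sdiff]
          refine ⟨mem_univ x, ?_⟩
          simp only [mem_insert, mem_singleton]
          rintro (rfl | rfl)
          · exact hv hx
          · exact hw hx
        have hcle := card_le_card hsub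
        rw [card_sdiff_of_subset (subset_univ _), card_univ, Fintype.card_fin, card_pair hvw,
          hPcard] at hcle
        omega
      have hget : ∀ v, v ∈ P → ∃ a, a ≠ aj ∧ (g a).2 = v := by
        intro v hv
        rw [hP, mem_image] at hv
        obtain ⟨a, ha, hav⟩ := hv
        exact ⟨a, (mem_erase.mp ha).1, hav⟩
      by_cases hy : j = yc i
      · -- three distinct non-aj indices
        obtain ⟨i1, i2, i3, h12, h13, h23, hn1, hn2, hn3⟩ :
            ∃ i1 i2 i3 : Fin n, i1 ≠ i2 ∧ i1 ≠ i3 ∧ i2 ≠ i3 ∧ i1 ≠ aj ∧ i2 ≠ aj ∧ i3 ≠ aj := by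
          by_cases h0 : aj.val = 0
          · exact ⟨⟨1, by omega⟩, ⟨2, by omega⟩, ⟨3, by omega⟩,
              by simp [Fin.ext_iff], by simp [Fin.ext_iff], by simp [Fin.ext_iff],
              by simp [Fin.ext_iff]; omega, by simp [Fin.ext_iff]; omega,
              by simp [Fin.ext_iff]; omega⟩
          · by_cases h1 : aj.val = 1
            · exact ⟨⟨0, by omega⟩, ⟨2, by omega⟩, ⟨3, by omega⟩,
                by simp [Fin.ext_iff], by simp [Fin.ext_iff], by simp [Fin.ext_iff],
                by simp [Fin.ext_iff]; omega, by simp [Fin.ext_iff]; omega,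
                by simp [Fin.ext_iff]; omega⟩
            · by_cases h2 : aj.val = 2
              · exact ⟨⟨0, by omega⟩, ⟨1, by omega⟩, ⟨3, by omega⟩,
                  by simp [Fin.ext_iff], by simp [Fin.ext_iff], by simp [Fin.ext_iff],
                  by simp [Fin.ext_iff]; omega, by simp [Fin.ext_iff]; omega,
                  by simp [Fin.ext_iff]; omega⟩
              · exact ⟨⟨0, by omega⟩, ⟨1, by omega⟩, ⟨2, by omega⟩,
                  by simp [Fin.ext_iff], by simp [Fin.ext_iff], by simp [Fin.ext_iff],
                  by simp [Fin.ext_iff]; omega, by simp [Fin.ext_iff]; omega,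
                  by simp [Fin.ext_iff]; omega⟩
        have hcond : ∀ a b, a ≠ aj → b ≠ aj → a ≠ b →
            (g a).2.val / 2 = (g b).2.val / 2 ∧ (g a).2.val < 4 := by
          intro a b ha hb hab
          by_contra hc
          have e := hpair a b ha hb hab
          simp only [hχ] at e
          rw [if_neg hc] at e
          rw [hy] at e
          exact xy_ne i e
        have c12 := hcond i1 i2 hn1 hn2 h12
        have c13 := hcond i1 i3 hn1 hn3 h13
        have c23 := hcond i2 i3 hn2 hn3 h23
        have d12 : (g i1).2.val ≠ (g i2).2.val := by
          intro h; exact h12 (pinj i1 i2 hn1 hn2 (Fin.ext h))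
        have d13 : (g i1).2.val ≠ (g i3).2.val := by
          intro h; exact h13 (pinj i1 i3 hn1 hn3 (Fin.ext h))
        have d23 : (g i2).2.val ≠ (g i3).2.val := by
          intro h; exact h23 (pinj i2 i3 hn2 hn3 (Fin.ext h))
        omega
      · -- j ≠ yc i : find a pair with the matching condition
        have hyc : ∀ a b, a ≠ aj → b ≠ aj → a ≠ b →
            ¬((g a).2.val / 2 = (g b).2.val / 2 ∧ (g a).2.val < 4) := by
          intro a b ha hb hab hc
          have e := hpair a b ha hb hab
          simp only [hχ] at e
          rw [if_pos hc] at e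
          exact hy e.symm
        by_cases h0P : (⟨0, by omega⟩ : Fin n) ∈ P ∧ (⟨1, by omega⟩ : Fin n) ∈ P
        · obtain ⟨a, ha, hav⟩ := hget _ h0P.1
          obtain ⟨b, hb, hbv⟩ := hget _ h0P.2
          have hab : a ≠ b := by
            intro h; rw [h, hbv] at hav; simp [Fin.ext_iff] at hav
          apply hyc a b ha hb hab
          rw [hav, hbv]
          norm_num
        · have h23P : (⟨2, by omega⟩ : Fin n) ∈ P ∧ (⟨3, by omega⟩ : Fin n) ∈ P := by
            rcases not_and_or.mp h0P with h | h
            · constructor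
              · by_contra hc
                exact hmiss _ _ (by simp [Fin.ext_iff]) h hc
              · by_contra hc
                exact hmiss _ _ (by simp [Fin.ext_iff]) h hc
            · constructor
              · by_contra hc
                exact hmiss _ _ (by simp [Fin.ext_iff]) h hc
              · by_contra hc
                exact hmiss _ _ (by simp [Fin.ext_iff]) h hc
          obtain ⟨a, ha, hav⟩ := hget _ h23P.1
          obtain ⟨b, hb, hbv⟩ := hget _ h23P.2
          have hab : a ≠ b := by
            intro h; rw [h, hbv] at hav; simp [Fin.ext_iff] at hav
          apply hyc a b ha hb hab
          rw [hav, hbv]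
          norm_num

lemma buildCopy {V : Type*} {r : ℕ} (G : SimpleGraph V) (c : Sym2 V → Fin r) (i : Fin r)
    (n' : ℕ) (K : Fin (n' + 1) → V) (O : Fin n' → V)
    (hK : Function.Injective K) (hO : Function.Injective O)
    (hKO : ∀ p q, K p ≠ O q)
    (adjK : ∀ p q, p ≠ q → G.Adj (K p) (K q))
    (adjO : ∀ p q, p ≠ q → G.Adj (O p) (O q))
    (colK : ∀ p q, p ≠ q → c s(K p, K q) = i)
    (colO : ∀ p q, p ≠ q → c s(O p, O q) = i) :
    MonoCopy G (cliqueSum (n' + 1) n') c i := by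
  have hadj : ∀ x y, (cliqueSum (n' + 1) n').Adj x y →
      G.Adj (Sum.elim K O x) (Sum.elim K O y) := by
    intro x y hxy
    rw [cliqueSum, fromRel_adj] at hxy
    obtain ⟨hne, hrel⟩ := hxy
    rcases x with a | a <;> rcases y with b | b
    · have : a ≠ b := fun h => hne (by rw [h])
      exact adjK a b this
    · simp at hrel
    · simp at hrel
    · have : a ≠ b := fun h => hne (by rw [h])
      exact adjO a b this
  refine ⟨⟨Sum.elim K O, fun {x y} h => hadj x y h⟩, ?_, ?_⟩
  · intro x y h
    have h' : Sum.elim K O x = Sum.elim K O y := h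
    rcases x with a | a <;> rcases y with b | b <;>
      simp only [Sum.elim_inl, Sum.elim_inr] at h'
    · exact congrArg Sum.inl (hK h')
    · exact absurd h' (hKO a b)
    · exact absurd h'.symm (hKO b a)
    · exact congrArg Sum.inr (hO h')
  · intro x y hxy
    show c s(Sum.elim K O x, Sum.elim K O y) = i
    rw [cliqueSum, fromRel_adj] at hxy
    obtain ⟨hne, hrel⟩ := hxy
    rcases x with a | a <;> rcases y with b | b <;>
      simp only [Sum.elim_inl, Sum.elim_inr]
    · exact colK a b (fun h => hne (by rw [h]))
    · simp at hrel
    · simp at hrel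
    · exact colO a b (fun h => hne (by rw [h]))







variable {V : Type*} {n' r : ℕ}

lemma step (hn : 2 ≤ n') (hr : 3 ≤ r)
    (Λ : Fin r × Fin (n' + 1) → Fin r × Fin (n' + 1) → Fin r) (hΛ : Good (n' + 1) r Λ)
    (G : SimpleGraph V) (hG : IsRamseyFor r G (completeGraph (Fin (n' + 1))))
    (c : Sym2 V → Fin r) (hc : ∀ i, ¬ MonoCopy G (cliqueSum (n' + 1) n') c i)
    (C : Finset (Fin r)) (A : Fin r → Fin (n' + 1) → V)
    (hAinj : ∀ i ∈ C, Function.Injective (A i))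
    (hAadj : ∀ i ∈ C, ∀ p q, p ≠ q → G.Adj (A i p) (A i q))
    (hAcol : ∀ i ∈ C, ∀ p q, p ≠ q → c s(A i p, A i q) = i)
    (hAdis : ∀ i ∈ C, ∀ j ∈ C, i ≠ j → ∀ p q, A i p ≠ A j q) :
    ∃ m, m ∉ C ∧ ∃ B : Fin (n' + 1) → V,
      Function.Injective B ∧ (∀ p q, p ≠ q → G.Adj (B p) (B q)) ∧
      (∀ p q, p ≠ q → c s(B p, B q) = m) ∧
      (∀ i ∈ C, ∀ p q, B p ≠ A i q) := by
  classical
  set blk : V → Option (Fin r × Fin (n' + 1)) := fun v =>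
    if h : ∃ ip : Fin r × Fin (n' + 1), ip.1 ∈ C ∧ A ip.1 ip.2 = v then some h.choose
    else none with hblk
  have blk_some : ∀ v ip, blk v = some ip → ip.1 ∈ C ∧ A ip.1 ip.2 = v := by
    intro v ip h
    simp only [hblk] at h
    by_cases h' : ∃ ip : Fin r × Fin (n' + 1), ip.1 ∈ C ∧ A ip.1 ip.2 = v
    · rw [dif_pos h'] at h
      have := Option.some.inj h
      rw [← this]
      exact h'.choose_spec
    · rw [dif_neg h'] at h
      cases h
  have blk_eq : ∀ i p, i ∈ C → blk (A i p) = some (i, p) := by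
    intro i p hi
    have hex : ∃ ip : Fin r × Fin (n' + 1), ip.1 ∈ C ∧ A ip.1 ip.2 = A i p := ⟨(i, p), hi, rfl⟩
    simp only [hblk]
    rw [dif_pos hex]
    congr 1
    obtain ⟨h1, h2⟩ := hex.choose_spec
    rcases hq : hex.choose with ⟨j, q⟩
    rw [hq] at h1 h2
    simp only at h1 h2
    by_cases hji : j = i
    · subst hji
      have := hAinj j hi h2
      rw [this]
    · exact absurd h2 (hAdis j h1 i hi hji q p)
  set D : V → V → Fin r := fun u v =>
    Option.elim (blk u) (Option.elim (blk v) (c s(u, v)) (fun b => b.1))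
      (fun a => Option.elim (blk v) a.1 (fun b => Λ a b)) with hD
  have Dsymm : ∀ u v, D u v = D v u := by
    intro u v
    simp only [hD]
    cases hbu : blk u <;> cases hbv : blk v <;> simp only [Option.elim]
    · rw [Sym2.eq_swap]
    · exact hΛ.1 _ _
  set c' : Sym2 V → Fin r := Sym2.lift ⟨D, Dsymm⟩ with hc'
  have hc'uv : ∀ u v, c' s(u, v) = D u v := by
    intro u v
    simp only [hc', Sym2.lift_mk]
  obtain ⟨m, f, hfinj, hfcol⟩ := hG c'
  have hfadj : ∀ a b, a ≠ b → G.Adj (f a) (f b) := by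
    intro a b h
    exact f.map_rel h
  have hcol : ∀ a b, a ≠ b → D (f a) (f b) = m := by
    intro a b h
    rw [← hc'uv]
    exact hfcol a b h
  by_cases hall : ∀ a, blk (f a) = none
  · -- all of the clique lies outside U
    have hco : ∀ a b, a ≠ b → c s(f a, f b) = m := by
      intro a b h
      have hd := hcol a b h
      rw [hD] at hd
      simp only [hall a, hall b, Option.elim] at hd
      exact hd
    by_cases hmC : m ∈ C
    · exfalso
      apply hc m
      refine buildCopy G c m n' f (fun q => A m q.castSucc) hfinj ?_ ?_ ?_ ?_ ?_ ?_
      · intro a b h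
        exact Fin.castSucc_injective n' (hAinj m hmC h)
      · intro p q h
        replace h : f p = A m q.castSucc := h
        have hs := blk_eq m q.castSucc hmC
        rw [← h, hall p] at hs
        cases hs
      · exact hfadj
      · intro p q h
        exact hAadj m hmC _ _ (fun hh => h (Fin.castSucc_injective n' hh))
      · exact hco
      · intro p q h
        exact hAcol m hmC _ _ (fun hh => h (Fin.castSucc_injective n' hh))
    · refine ⟨m, hmC, f, hfinj, hfadj, hco, ?_⟩
      intro i hi p q he
      have hs := blk_eq i q hi
      rw [← he, hall p] at hs
      cases hs
  · push_neg at hall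
    obtain ⟨a₀, ha₀⟩ := hall
    obtain ⟨⟨i, p⟩, hip⟩ := Option.ne_none_iff_exists'.mp ha₀
    by_cases hins : ∀ a, blk (f a) ≠ none
    · -- the whole clique lies inside U : contradict goodness of Λ
      exfalso
      choose ips hips using fun a => Option.ne_none_iff_exists'.mp (hins a)
      have ginj : Function.Injective ips := by
        intro a b h
        have h1 := (blk_some _ _ (hips a)).2
        have h2 := (blk_some _ _ (hips b)).2
        apply hfinj
        rw [← h1, ← h2, h]
      apply hΛ.2.2 ips ginj m
      intro a b h
      have hd := hcol a b h
      rw [hD] at hd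
      simp only [hips a, hips b, Option.elim] at hd
      exact hd
    · -- mixed case : exactly one vertex inside U
      exfalso
      push_neg at hins
      obtain ⟨b₀, hb₀'⟩ := hins
      have hab₀ : a₀ ≠ b₀ := by
        intro h
        rw [h, hb₀'] at hip
        cases hip
      have hmi : m = i := by
        have hd := hcol a₀ b₀ hab₀
        rw [hD] at hd
        simp only [hip, hb₀', Option.elim] at hd
        exact hd.symm
      have huniq : ∀ a, a ≠ a₀ → blk (f a) = none := by
        intro a ha
        by_contra hcon
        obtain ⟨⟨j, q⟩, hjq⟩ := Option.ne_none_iff_exists'.mp hcon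
        have hab : a ≠ b₀ := by
          intro h
          rw [h, hb₀'] at hjq
          cases hjq
        have hmj : j = m := by
          have hd := hcol a b₀ hab
          rw [hD] at hd
          simp only [hjq, hb₀', Option.elim] at hd
          exact hd
        have hji : j = i := hmj.trans hmi
        subst hji
        have hΛe : Λ (j, q) (j, p) = m := by
          have hd := hcol a a₀ ha
          rw [hD] at hd
          simp only [hjq, hip, Option.elim] at hd
          exact hd
        have hfa := (blk_some _ _ hjq).2
        have hfa0 := (blk_some _ _ hip).2
        have hqp : q ≠ p := by
          intro h
          apply ha
          apply hfinj
          rw [← hfa, ← hfa0, h]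
        exact hΛ.2.1 j q p hqp (by rw [hΛe, hmi])
      have hiC : i ∈ C := (blk_some _ _ hip).1
      apply hc i
      refine buildCopy G c i n' (A i) (fun b => f (a₀.succAbove b)) (hAinj i hiC) ?_ ?_
        (hAadj i hiC) ?_ (hAcol i hiC) ?_
      · intro a b h
        exact Fin.succAbove_right_injective (hfinj h)
      · intro q b he
        have hs := blk_eq i q hiC
        rw [he, huniq _ (Fin.succAbove_ne a₀ b)] at hs
        cases hs
      · intro a b h
        exact hfadj _ _ (fun hh => h (Fin.succAbove_right_injective hh))
      · intro a b h
        have hd := hcol (a₀.succAbove a) (a₀.succAbove b)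
          (fun hh => h (Fin.succAbove_right_injective hh))
        rw [hD] at hd
        simp only [huniq _ (Fin.succAbove_ne a₀ a), huniq _ (Fin.succAbove_ne a₀ b),
          Option.elim] at hd
        rw [hd, hmi]



lemma keyFalse {V : Type*} {n' r : ℕ} (hn : 2 ≤ n') (hr : 3 ≤ r)
    (Λ : Fin r × Fin (n' + 1) → Fin r × Fin (n' + 1) → Fin r) (hΛ : Good (n' + 1) r Λ)
    (G : SimpleGraph V) (hG : IsRamseyFor r G (completeGraph (Fin (n' + 1))))
    (c : Sym2 V → Fin r) (hc : ∀ i, ¬ MonoCopy G (cliqueSum (n' + 1) n') c i) : False := by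
  classical
  have hr0 : 0 < r := by omega
  obtain ⟨m0, f0, -, -⟩ := hG (fun _ => ⟨0, hr0⟩)
  have v0 : V := f0 ⟨0, by omega⟩
  have main : ∀ (k : ℕ) (C : Finset (Fin r)) (A : Fin r → Fin (n' + 1) → V),
      (univ \ C).card ≤ k →
      (∀ i ∈ C, Function.Injective (A i)) →
      (∀ i ∈ C, ∀ p q, p ≠ q → G.Adj (A i p) (A i q)) →
      (∀ i ∈ C, ∀ p q, p ≠ q → c s(A i p, A i q) = i) →
      (∀ i ∈ C, ∀ j ∈ C, i ≠ j → ∀ p q, A i p ≠ A j q) → False := by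
    intro k
    induction k with
    | zero =>
      intro C A hcard h1 h2 h3 h4
      obtain ⟨m, hm, -⟩ := step hn hr Λ hΛ G hG c hc C A h1 h2 h3 h4
      have hempty : (univ \ C) = ∅ := card_eq_zero.mp (Nat.le_zero.mp hcard)
      have hmem : m ∈ univ \ C := mem_sdiff.mpr ⟨mem_univ m, hm⟩
      rw [hempty] at hmem
      exact absurd hmem (notMem_empty m)
    | succ k ih =>
      intro C A hcard h1 h2 h3 h4
      obtain ⟨m, hm, B, hB1, hB2, hB3, hB4⟩ := step hn hr Λ hΛ G hG c hc C A h1 h2 h3 h4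
      have hsd : univ \ insert m C = (univ \ C).erase m := by
        ext x
        simp only [mem_erase, mem_sdiff, mem_insert, mem_univ, true_and]
        tauto
      have hmemm : m ∈ univ \ C := mem_sdiff.mpr ⟨mem_univ m, hm⟩
      refine ih (insert m C) (Function.update A m B) ?_ ?_ ?_ ?_ ?_
      · rw [hsd, card_erase_of_mem hmemm]
        have hpos : 0 < (univ \ C).card := card_pos.mpr ⟨m, hmemm⟩
        omega
      · intro i hi
        rcases mem_insert.mp hi with h | h
        · subst h; rw [Function.update_self]; exact hB1
        · rw [Function.update_of_ne (by rintro rfl; exact hm h)]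
          exact h1 i h
      · intro i hi
        rcases mem_insert.mp hi with h | h
        · subst h; rw [Function.update_self]; exact hB2
        · rw [Function.update_of_ne (by rintro rfl; exact hm h)]
          exact h2 i h
      · intro i hi
        rcases mem_insert.mp hi with h | h
        · subst h; rw [Function.update_self]; exact hB3
        · rw [Function.update_of_ne (by rintro rfl; exact hm h)]
          exact h3 i h
      · intro i hi j hj hij p q
        rcases mem_insert.mp hi with h | h <;> rcases mem_insert.mp hj with h' | h'
        · exact absurd (h.trans h'.symm) hij
        · subst h
          rw [Function.update_self, Function.update_of_ne (by rintro rfl; exact hm h')]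
          exact hB4 j h' p q
        · subst h'
          rw [Function.update_self, Function.update_of_ne (by rintro rfl; exact hm h)]
          exact (hB4 i h q p).symm
        · rw [Function.update_of_ne (by rintro rfl; exact hm h),
            Function.update_of_ne (by rintro rfl; exact hm h')]
          exact h4 i h j h' hij p q
  exact main r ∅ (fun _ _ => v0) (by simp) (by simp) (by simp) (by simp) (by simp)

theorem stmt_1' (n r : ℕ) (hn : 3 ≤ n) (hr : 3 ≤ r) (hnr : (n, r) ≠ (3, 3))
    {V : Type*} (G : SimpleGraph V) (hG : IsRamseyFor r G (completeGraph (Fin n))) :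
    IsRamseyFor r G (cliqueSum n (n - 1)) := by
  intro c
  by_contra hcon
  push_neg at hcon
  obtain ⟨n', rfl⟩ : ∃ n', n = n' + 1 := ⟨n - 1, by omega⟩
  have hn' : 2 ≤ n' := by omega
  have hcs : ∀ i, ¬ MonoCopy G (cliqueSum (n' + 1) n') c i := by
    intro i
    have h := hcon i
    simpa using h
  by_cases h3 : n' = 2
  · subst h3
    have hr4 : 4 ≤ r := by
      rcases Nat.lt_or_ge r 4 with h | h
      · exfalso
        apply hnr
        have hreq : r = 3 := by omega
        rw [hreq]
      · exact h
    obtain ⟨Λ, hΛ⟩ := existsGood3 (2 + 1) r rfl hr4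
    exact keyFalse hn' hr Λ hΛ G hG c hcs
  · have h4 : 4 ≤ n' + 1 := by omega
    obtain ⟨Λ, hΛ⟩ := existsGood4 (n' + 1) r h4 hr
    exact keyFalse hn' hr Λ hΛ G hG c hcs

end RamseyEquivProof

/-- For `n, r ≥ 3` with `(n, r) ≠ (3, 3)`, every graph `G` that is `r`-Ramsey
for `K_n` is also `r`-Ramsey for `K_n + K_{n-1}`. -/
theorem stmt_1 (n r : ℕ) (hn : 3 ≤ n) (hr : 3 ≤ r) (hnr : (n, r) ≠ (3, 3))
    {V : Type*} (G : SimpleGraph V) (hG : IsRamseyFor r G (completeGraph (Fin n))) :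
    IsRamseyFor r G (cliqueSum n (n - 1)) := by
  exact stmt_1' n r hn hr hnr G hG
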